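/- Let ρ > 1 and let W > 0 be a fixed positive real. Define T_n = log_ρ(n(ρ−1)/W) and t_n = h(T_n) where h(x) = ⌊x⌋ + (ρ^{x}−1)/(ρ−1). Suppose (τ_k) is a sequence of reals such that for every δ > 0 and all sufficiently large k: k/(ρ^{τ_k} l_ρ(τ_k)) ≤ W e^δ/(ρ−1) and k/(ρ^{τ_k − δ} l_ρ(τ_k − δ)) ≥ W e^{−δ}/(ρ−1), where l_ρ(x) = (1+(ρ−1){x})ρ^{−{x}}. Then τ_k − t_k → 0 as k → ∞. -/

import Mathlib

open Filter

/-- The 1-periodic function `l_ρ(x) = (1+(ρ−1){x})·ρ^{−{x}}`. -/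
noncomputable def lrho (ρ x : ℝ) : ℝ :=
  (1 + (ρ - 1) * Int.fract x) * ρ ^ (-Int.fract x)

/-- `h(x) = ⌊x⌋ + (ρ^{x} − 1)/(ρ − 1)`. -/
noncomputable def hfun (ρ x : ℝ) : ℝ :=
  (⌊x⌋ : ℝ) + (ρ ^ Int.fract x - 1) / (ρ - 1)

noncomputable def hinv (ρ x : ℝ) : ℝ :=
  (⌊x⌋ : ℝ) + Real.logb ρ (1 + (ρ - 1) * Int.fract x)

variable {ρ : ℝ}

lemma arg_pos (hρ : 1 < ρ) (x : ℝ) : 0 < 1 + (ρ - 1) * Int.fract x := by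
  have h1 := Int.fract_nonneg x
  nlinarith

lemma arg_lt (hρ : 1 < ρ) (x : ℝ) : 1 + (ρ - 1) * Int.fract x < ρ := by
  have h1 := Int.fract_lt_one x
  nlinarith

lemma rpow_hinv (hρ : 1 < ρ) (x : ℝ) : ρ ^ x * lrho ρ x = ρ ^ hinv ρ x := by
  have hρ0 : (0:ℝ) < ρ := by linarith
  have hlog : ρ ^ Real.logb ρ (1 + (ρ - 1) * Int.fract x) = 1 + (ρ - 1) * Int.fract x :=
    Real.rpow_logb hρ0 (ne_of_gt hρ) (arg_pos hρ x)
  have hx : x = (⌊x⌋ : ℝ) + Int.fract x := (Int.floor_add_fract x).symm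
  have hne : ρ ^ Int.fract x ≠ 0 := (Real.rpow_pos_of_pos hρ0 _).ne'
  rw [hinv, Real.rpow_add hρ0, hlog, lrho]
  nth_rewrite 1 [hx]
  rw [Real.rpow_add hρ0, Real.rpow_neg hρ0.le]
  field_simp

lemma hfun_hinv (hρ : 1 < ρ) (x : ℝ) : hfun ρ (hinv ρ x) = x := by
  have hρ0 : (0:ℝ) < ρ := by linarith
  set g := Real.logb ρ (1 + (ρ - 1) * Int.fract x) with hg
  have hg0 : 0 ≤ g := Real.logb_nonneg hρ (by have := Int.fract_nonneg x; nlinarith)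
  have hg1 : g < 1 := by
    have h1 : g < Real.logb ρ ρ :=
      Real.logb_lt_logb hρ (arg_pos hρ x) (arg_lt hρ x)
    rwa [Real.logb_self_eq_one hρ] at h1
  have hfl : ⌊hinv ρ x⌋ = ⌊x⌋ := by
    rw [hinv, ← hg, Int.floor_intCast_add]
    have h2 : ⌊g⌋ = 0 := Int.floor_eq_zero_iff.mpr ⟨hg0, hg1⟩
    omega
  have hfr : Int.fract (hinv ρ x) = g := by
    rw [Int.fract, hfl, hinv, ← hg]; ring
  rw [hfun, hfl, hfr, hg, Real.rpow_logb hρ0 (ne_of_gt hρ) (arg_pos hρ x)]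
  have h2 : (1 + (ρ - 1) * Int.fract x - 1) / (ρ - 1) = Int.fract x := by
    rw [add_sub_cancel_left]
    exact mul_div_cancel_left₀ _ (by linarith)
  rw [h2]
  exact Int.floor_add_fract x

lemma phi_mem (hρ : 1 < ρ) (x : ℝ) :
    0 ≤ (ρ ^ Int.fract x - 1) / (ρ - 1) ∧ (ρ ^ Int.fract x - 1) / (ρ - 1) < 1 := by
  have hρ0 : (0:ℝ) < ρ := by linarith
  have h1 : (1:ℝ) ≤ ρ ^ Int.fract x := by
    rw [← Real.rpow_zero ρ]
    exact Real.rpow_le_rpow_left_iff hρ |>.mpr (Int.fract_nonneg x)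
  have h2 : ρ ^ Int.fract x < ρ := by
    nth_rewrite 2 [← Real.rpow_one ρ]
    exact Real.rpow_lt_rpow_left_iff hρ |>.mpr (Int.fract_lt_one x)
  constructor
  · apply div_nonneg <;> linarith
  · rw [div_lt_one (by linarith)]; linarith

lemma hfun_mono (hρ : 1 < ρ) : Monotone (hfun ρ) := by
  intro x y hxy
  rcases eq_or_lt_of_le (Int.floor_le_floor hxy) with hf | hf
  · have hfr : Int.fract x ≤ Int.fract y := by
      rw [Int.fract, Int.fract, hf]; linarith
    have h1 : ρ ^ Int.fract x ≤ ρ ^ Int.fract y :=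
      Real.rpow_le_rpow_left_iff hρ |>.mpr hfr
    rw [hfun, hfun, hf]
    have hρ1 : (0:ℝ) < ρ - 1 := by linarith
    gcongr
  · have h1 := (phi_mem hρ x).2
    have h2 := (phi_mem hρ y).1
    have : (⌊x⌋ : ℝ) + 1 ≤ (⌊y⌋ : ℝ) := by exact_mod_cast hf
    rw [hfun, hfun]
    linarith

lemma rpow_sub_le (hρ : 1 < ρ) {a b : ℝ} (h0 : 0 ≤ a) (hab : a ≤ b) (hb : b ≤ 1) :
    ρ ^ b - ρ ^ a ≤ ρ * Real.log ρ * (b - a) := by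
  have hρ0 : (0:ℝ) < ρ := by linarith
  have hlog : 0 < Real.log ρ := Real.log_pos hρ
  have key : ∀ t : ℝ, 0 ≤ t → ρ ^ t - 1 ≤ t * Real.log ρ * ρ ^ t := by
    intro t ht
    have h1 : 1 - t * Real.log ρ ≤ Real.exp (-(t * Real.log ρ)) := by
      have := Real.add_one_le_exp (-(t * Real.log ρ)); linarith
    have h2 : ρ ^ t = Real.exp (t * Real.log ρ) := by
      rw [Real.rpow_def_of_pos hρ0]; ring_nf
    have h3 : Real.exp (-(t * Real.log ρ)) * Real.exp (t * Real.log ρ) = 1 := by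
      rw [← Real.exp_add]; simp
    have hexp : 0 < Real.exp (t * Real.log ρ) := Real.exp_pos _
    nlinarith [mul_le_mul_of_nonneg_right h1 hexp.le]
  have hsplit : ρ ^ b = ρ ^ a * ρ ^ (b - a) := by
    rw [← Real.rpow_add hρ0]; ring_nf
  have hk := key (b - a) (by linarith)
  have ha0 : 0 < ρ ^ a := Real.rpow_pos_of_pos hρ0 a
  have e1 : ρ ^ b - ρ ^ a ≤ (b - a) * Real.log ρ * ρ ^ b := by
    have h4 := mul_le_mul_of_nonneg_left hk ha0.le
    rw [hsplit]
    nlinarith [h4]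
  have hbb : ρ ^ b ≤ ρ := by
    calc ρ ^ b ≤ ρ ^ (1:ℝ) := Real.rpow_le_rpow_left_iff hρ |>.mpr hb
    _ = ρ := Real.rpow_one ρ
  have e2 : (b - a) * Real.log ρ * ρ ^ b ≤ (b - a) * Real.log ρ * ρ :=
    mul_le_mul_of_nonneg_left hbb (by nlinarith)
  nlinarith

lemma hfun_lip (hρ : 1 < ρ) (x d : ℝ) (hd0 : 0 ≤ d) (hd1 : d ≤ 1) :
    hfun ρ (x + d) - hfun ρ x ≤ ρ * Real.log ρ / (ρ - 1) * d := by
  have hρ1 : (0:ℝ) < ρ - 1 := by linarith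
  have hfx0 := Int.fract_nonneg x
  have hfx1 := Int.fract_lt_one x
  have hfy0 := Int.fract_nonneg (x + d)
  have hfy1 := Int.fract_lt_one (x + d)
  have hfl : ⌊x⌋ ≤ ⌊x + d⌋ := Int.floor_le_floor (by linarith)
  have hfl2 : ⌊x + d⌋ ≤ ⌊x⌋ + 1 := by
    have h := Int.floor_le_floor (show x + d ≤ x + 1 by linarith)
    rwa [Int.floor_add_one] at h
  rw [div_mul_eq_mul_div]
  rcases eq_or_lt_of_le hfl with hf | hf
  · have hfr : Int.fract (x + d) = Int.fract x + d := by
      rw [Int.fract, Int.fract, ← hf]; ring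
    have hle := rpow_sub_le hρ (a := Int.fract x) (b := Int.fract x + d) hfx0 (by linarith)
      (by rw [hfr] at hfy1; linarith)
    have goal' : ((ρ ^ (Int.fract x + d) - 1) - (ρ ^ Int.fract x - 1)) / (ρ - 1)
        ≤ ρ * Real.log ρ * d / (ρ - 1) := by
      exact (div_le_div_iff_of_pos_right hρ1).mpr (by linarith)
    rw [sub_div] at goal'
    rw [hfun, hfun, ← hf, hfr]
    linarith
  · have hf1 : ⌊x + d⌋ = ⌊x⌋ + 1 := le_antisymm hfl2 hf
    have hfr : Int.fract (x + d) = Int.fract x + d - 1 := by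
      rw [Int.fract, Int.fract, hf1]; push_cast; ring
    have h1 := rpow_sub_le hρ (a := Int.fract x) (b := 1) hfx0 (le_of_lt hfx1) le_rfl
    have h2 := rpow_sub_le hρ (a := 0) (b := Int.fract (x + d)) le_rfl hfy0 (le_of_lt hfy1)
    rw [Real.rpow_one] at h1
    rw [Real.rpow_zero, hfr] at h2
    have goal' : ((ρ ^ (Int.fract x + d - 1) - 1) - (ρ ^ Int.fract x - 1) + (ρ - 1)) / (ρ - 1)
        ≤ ρ * Real.log ρ * d / (ρ - 1) := by
      exact (div_le_div_iff_of_pos_right hρ1).mpr (by linarith)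
    rw [add_div, sub_div, div_self hρ1.ne'] at goal'
    rw [hfun, hfun, hf1, hfr]
    push_cast
    linarith
theorem stmt13 (ρ W : ℝ) (hρ : 1 < ρ) (hW : 0 < W) (τ : ℕ → ℝ)
    (hτ : ∀ δ > (0 : ℝ), ∀ᶠ k : ℕ in atTop,
      (k : ℝ) / (ρ ^ τ k * lrho ρ (τ k)) ≤ W * Real.exp δ / (ρ - 1) ∧
      W * Real.exp (-δ) / (ρ - 1) ≤ (k : ℝ) / (ρ ^ (τ k - δ) * lrho ρ (τ k - δ))) :
    Tendsto (fun k : ℕ =>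
        τ k - hfun ρ (Real.logb ρ ((k : ℝ) * (ρ - 1) / W)))
      atTop (nhds 0) := by
  have hρ0 : (0:ℝ) < ρ := by linarith
  have hρ1 : (0:ℝ) < ρ - 1 := by linarith
  have hlog : 0 < Real.log ρ := Real.log_pos hρ
  set L : ℝ := ρ * Real.log ρ / (ρ - 1) with hLdef
  have hL : 0 < L := by positivity
  have hC : 0 < Real.log ρ + L := by positivity
  rw [NormedAddCommGroup.tendsto_nhds_zero]
  intro ε hε
  set δ : ℝ := min (Real.log ρ) (ε * Real.log ρ / (2 * (Real.log ρ + L))) with hδdef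
  have hδ : 0 < δ := lt_min hlog (by positivity)
  set δ' : ℝ := δ / Real.log ρ with hδ'def
  have hδ'0 : 0 < δ' := by positivity
  have hδ'1 : δ' ≤ 1 := by
    rw [hδ'def, div_le_one hlog]
    exact min_le_left _ _
  have hbound : δ + L * δ' ≤ ε / 2 := by
    have h13 : δ * (Real.log ρ + L) ≤ ε * Real.log ρ / 2 := by
      calc δ * (Real.log ρ + L)
          ≤ (ε * Real.log ρ / (2 * (Real.log ρ + L))) * (Real.log ρ + L) :=
            mul_le_mul_of_nonneg_right (min_le_right _ _) hC.le
        _ = ε * Real.log ρ / 2 := by field_simp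
    have h14 : δ + L * δ' = δ * (Real.log ρ + L) / Real.log ρ := by
      rw [hδ'def]; field_simp
    rw [h14, div_le_iff₀ hlog]
    nlinarith
  filter_upwards [hτ δ hδ, eventually_ge_atTop 1] with k hk hk1
  have hkR : (1:ℝ) ≤ (k:ℝ) := by exact_mod_cast hk1
  set Q : ℝ := (k:ℝ) * (ρ - 1) / W with hQdef
  have hQ : 0 < Q := by positivity
  set T : ℝ := Real.logb ρ Q with hTdef
  obtain ⟨hk1', hk2'⟩ := hk
  rw [rpow_hinv hρ (τ k)] at hk1'
  rw [rpow_hinv hρ (τ k - δ)] at hk2'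
  have hP : 0 < ρ ^ hinv ρ (τ k) := Real.rpow_pos_of_pos hρ0 _
  have hP2 : 0 < ρ ^ hinv ρ (τ k - δ) := Real.rpow_pos_of_pos hρ0 _
  have hlogbexp : Real.logb ρ (Real.exp δ) = δ' := by
    rw [Real.logb, Real.log_exp, hδ'def]
  -- first inequality: T - δ' ≤ hinv ρ (τ k)
  rw [div_le_div_iff₀ hP hρ1] at hk1'
  have h2 : Q ≤ Real.exp δ * ρ ^ hinv ρ (τ k) := by
    rw [hQdef, div_le_iff₀ hW]
    nlinarith
  have h3 : T ≤ δ' + hinv ρ (τ k) := by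
    have h9 := Real.logb_le_logb_of_le hρ hQ h2
    rwa [Real.logb_mul (Real.exp_ne_zero δ) hP.ne', hlogbexp,
      Real.logb_rpow hρ0 (ne_of_gt hρ)] at h9
  have h4 : hfun ρ (T - δ') ≤ τ k := by
    have h := hfun_mono hρ (show T - δ' ≤ hinv ρ (τ k) by linarith)
    rwa [hfun_hinv hρ] at h
  have h5 : hfun ρ T - τ k ≤ L * δ' := by
    have h := hfun_lip hρ (T - δ') δ' hδ'0.le hδ'1
    rw [sub_add_cancel] at h
    linarith
  -- second inequality: hinv ρ (τ k - δ) ≤ T + δ'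
  rw [div_le_div_iff₀ hρ1 hP2] at hk2'
  have hE : Real.exp δ * Real.exp (-δ) = 1 := by
    rw [← Real.exp_add]; simp
  have h6 : W * ρ ^ hinv ρ (τ k - δ) ≤ Real.exp δ * ((k:ℝ) * (ρ - 1)) := by
    have h7 := mul_le_mul_of_nonneg_left hk2' (Real.exp_pos δ).le
    calc W * ρ ^ hinv ρ (τ k - δ)
        = Real.exp δ * Real.exp (-δ) * W * ρ ^ hinv ρ (τ k - δ) := by rw [hE]; ring
      _ = Real.exp δ * (W * Real.exp (-δ) * ρ ^ hinv ρ (τ k - δ)) := by ring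
      _ ≤ Real.exp δ * ((k:ℝ) * (ρ - 1)) := h7
  have h2' : ρ ^ hinv ρ (τ k - δ) ≤ Real.exp δ * Q := by
    rw [← mul_le_mul_iff_of_pos_left hW]
    calc W * ρ ^ hinv ρ (τ k - δ) ≤ Real.exp δ * ((k:ℝ) * (ρ - 1)) := h6
      _ = W * (Real.exp δ * Q) := by rw [hQdef]; field_simp
  have h8 : hinv ρ (τ k - δ) ≤ δ' + T := by
    have h9 := Real.logb_le_logb_of_le hρ hP2 h2'
    rwa [Real.logb_mul (Real.exp_ne_zero δ) hQ.ne', hlogbexp,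
      Real.logb_rpow hρ0 (ne_of_gt hρ), ← hTdef] at h9
  have h10 : τ k - δ ≤ hfun ρ (T + δ') := by
    have h := hfun_mono hρ (show hinv ρ (τ k - δ) ≤ T + δ' by linarith)
    rwa [hfun_hinv hρ] at h
  have h11 : hfun ρ (T + δ') - hfun ρ T ≤ L * δ' := hfun_lip hρ T δ' hδ'0.le hδ'1
  -- combine
  rw [Real.norm_eq_abs, abs_lt]
  constructor <;> [skip; skip] <;> linarith
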